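/- Fix η > 0 and, for each natural number n ≥ 2, set δ = 1/2 and λ = 1/n and compute p̂ := c(1−δ)/(c(1−δ) + g·(1−δ + λδ(1+δ−λδ))) and p*(√δ) := c(1−√δ)/(c(1−√δ) + g·(1 − √δ(1−λ))) with these values. Then, as n → ∞: (i) p*(√δ) converges to c/(c+g); (ii) φ^{⌊ηn⌋}(p̂) converges to c·e^{−η}/(g + c·e^{−η}); and (iii) c·e^{−η}/(g + c·e^{−η}) < c/(c+g), where φ(p) := (1−λ)p/(1−λp) and φ^k denotes the k-fold iterate. -/

import Mathlib

open Filter Real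

lemma iter_phi (l : ℝ) (hl0 : 0 ≤ l) (hl1 : l ≤ 1) :
    ∀ (k : ℕ) (o : ℝ), 0 ≤ o →
      (fun p : ℝ => (1 - l) * p / (1 - l * p))^[k] (o / (1 + o))
        = (1 - l) ^ k * o / (1 + (1 - l) ^ k * o) := by
  intro k
  induction k with
  | zero => intro o ho; simp
  | succ k ih =>
    intro o ho
    have h1 : (0:ℝ) < 1 + o := by linarith
    have h2 : (0:ℝ) ≤ (1 - l) * o := mul_nonneg (by linarith) ho
    have h3 : (0:ℝ) < 1 + (1 - l) * o := by linarith
    have hne1 : (1:ℝ) + o ≠ 0 := ne_of_gt h1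
    have hne3 : (1:ℝ) + (1 - l) * o ≠ 0 := ne_of_gt h3
    rw [Function.iterate_succ_apply]
    have hd : 1 - l * (o / (1 + o)) = (1 + (1 - l) * o) / (1 + o) := by
      field_simp; ring
    have hstep : (1 - l) * (o / (1 + o)) / (1 - l * (o / (1 + o)))
        = ((1 - l) * o) / (1 + (1 - l) * o) := by
      rw [hd]
      field_simp
    simp only [hstep]
    rw [ih _ h2, pow_succ]
    ring_nf

theorem overexperimentation_limits
    (c g : ℝ) (hc : 0 < c) (hg : 0 < g) (η : ℝ) (hη : 0 < η) :
    Filter.Tendsto (fun n : ℕ =>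
        c * (1 - Real.sqrt ((1:ℝ)/2)) /
          (c * (1 - Real.sqrt ((1:ℝ)/2)) +
            g * (1 - Real.sqrt ((1:ℝ)/2) * (1 - 1 / (n : ℝ)))))
      Filter.atTop (nhds (c / (c + g))) ∧
    Filter.Tendsto (fun n : ℕ =>
        (fun p : ℝ => (1 - 1 / (n : ℝ)) * p / (1 - 1 / (n : ℝ) * p))^[⌊η * (n : ℝ)⌋₊]
          (c * (1 - (1:ℝ)/2) / (c * (1 - (1:ℝ)/2) +
            g * (1 - (1:ℝ)/2 + (1 / (n : ℝ)) * ((1:ℝ)/2) *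
              (1 + (1:ℝ)/2 - (1 / (n : ℝ)) * ((1:ℝ)/2))))))
      Filter.atTop
      (nhds (c * Real.exp (-η) / (g + c * Real.exp (-η)))) ∧
    c * Real.exp (-η) / (g + c * Real.exp (-η)) < c / (c + g) := by
  have hinv : Tendsto (fun n : ℕ => 1 / (n : ℝ)) atTop (nhds 0) :=
    tendsto_one_div_atTop_nhds_zero_nat
  have h1n : Tendsto (fun n : ℕ => 1 - 1 / (n : ℝ)) atTop (nhds 1) := by
    simpa using (tendsto_const_nhds : Tendsto (fun _ : ℕ => (1:ℝ)) atTop (nhds 1)).sub hinv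
  have hs : Real.sqrt ((1:ℝ)/2) < 1 := by
    rw [show (1:ℝ) = Real.sqrt 1 by simp]
    exact Real.sqrt_lt_sqrt (by norm_num) (by norm_num)
  have hs0 : 0 ≤ Real.sqrt ((1:ℝ)/2) := Real.sqrt_nonneg _
  refine ⟨?_, ?_, ?_⟩
  · -- part (i)
    have hden : Tendsto (fun n : ℕ =>
        c * (1 - Real.sqrt ((1:ℝ)/2)) +
            g * (1 - Real.sqrt ((1:ℝ)/2) * (1 - 1 / (n : ℝ)))) atTop
        (nhds (c * (1 - Real.sqrt ((1:ℝ)/2)) + g * (1 - Real.sqrt ((1:ℝ)/2) * 1))) :=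
      tendsto_const_nhds.add (tendsto_const_nhds.mul
        (tendsto_const_nhds.sub (tendsto_const_nhds.mul h1n)))
    have hne : c * (1 - Real.sqrt ((1:ℝ)/2)) + g * (1 - Real.sqrt ((1:ℝ)/2) * 1) ≠ 0 := by
      have h1 : 0 < 1 - Real.sqrt ((1:ℝ)/2) := by linarith
      have h2 : 0 < 1 - Real.sqrt ((1:ℝ)/2) * 1 := by linarith
      positivity
    have hval : c / (c + g) = c * (1 - Real.sqrt ((1:ℝ)/2)) /
        (c * (1 - Real.sqrt ((1:ℝ)/2)) + g * (1 - Real.sqrt ((1:ℝ)/2) * 1)) := by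
      have h1 : 0 < 1 - Real.sqrt ((1:ℝ)/2) := by linarith
      rw [div_eq_div_iff (by positivity) (by positivity)]
      ring
    rw [hval]
    exact tendsto_const_nhds.div hden hne
  · -- part (ii)
    set L := c * Real.exp (-η) / g with hL
    have hLpos : 0 < L := by positivity
    set o : ℕ → ℝ := fun n => (c * (1 - (1:ℝ)/2)) /
      (g * (1 - (1:ℝ)/2 + (1 / (n : ℝ)) * ((1:ℝ)/2) *
        (1 + (1:ℝ)/2 - (1 / (n : ℝ)) * ((1:ℝ)/2)))) with ho
    have hoD : Tendsto (fun n : ℕ => g * (1 - (1:ℝ)/2 + (1 / (n : ℝ)) * ((1:ℝ)/2) *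
        (1 + (1:ℝ)/2 - (1 / (n : ℝ)) * ((1:ℝ)/2)))) atTop
        (nhds (g * (1 - (1:ℝ)/2 + 0 * ((1:ℝ)/2) * (1 + (1:ℝ)/2 - 0 * ((1:ℝ)/2))))) :=
      tendsto_const_nhds.mul (tendsto_const_nhds.add
        ((hinv.mul tendsto_const_nhds).mul
          (tendsto_const_nhds.sub (hinv.mul tendsto_const_nhds))))
    have hoT : Tendsto o atTop (nhds (c / g)) := by
      have hden0 : g * (1 - (1:ℝ)/2 + 0 * ((1:ℝ)/2) * (1 + (1:ℝ)/2 - 0 * ((1:ℝ)/2))) ≠ 0 := by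
        norm_num; positivity
      have := ((tendsto_const_nhds : Tendsto (fun _ : ℕ => c * (1 - (1:ℝ)/2)) atTop
        (nhds (c * (1 - (1:ℝ)/2))))).div hoD hden0
      have hval : (c * (1 - (1:ℝ)/2)) /
          (g * (1 - (1:ℝ)/2 + 0 * ((1:ℝ)/2) * (1 + (1:ℝ)/2 - 0 * ((1:ℝ)/2)))) = c / g := by
        rw [div_eq_div_iff (by norm_num; positivity) (by positivity)]
        ring
      rw [ho, ← hval]
      exact this
    set s : ℕ → ℝ := fun n => (1 - 1 / (n : ℝ)) ^ ⌊η * (n : ℝ)⌋₊ with hsdef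
    have hk : Tendsto (fun n : ℕ => (⌊η * (n : ℝ)⌋₊ : ℝ) / (n : ℝ)) atTop (nhds η) := by
      apply tendsto_of_tendsto_of_tendsto_of_le_of_le'
        (g := fun n : ℕ => η - 1 / (n : ℝ)) (h := fun _ => η)
      · simpa using (tendsto_const_nhds : Tendsto (fun _ : ℕ => η) atTop (nhds η)).sub hinv
      · exact tendsto_const_nhds
      · filter_upwards [eventually_ge_atTop 1] with n hn
        have hn' : (0:ℝ) < n := by exact_mod_cast hn
        rw [sub_le_iff_le_add, ← add_div, le_div_iff₀ hn']
        nlinarith [Nat.sub_one_lt_floor (η * (n : ℝ))]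
      · filter_upwards [eventually_ge_atTop 1] with n hn
        have hn' : (0:ℝ) < n := by exact_mod_cast hn
        rw [div_le_iff₀ hn']
        exact Nat.floor_le (by positivity)
    have hlog : Tendsto (fun n : ℕ => (n : ℝ) * Real.log (1 + (-1) / (n : ℝ))) atTop
        (nhds (-1)) :=
      (Real.tendsto_mul_log_one_add_div_atTop (-1)).comp tendsto_natCast_atTop_atTop
    have hsT : Tendsto s atTop (nhds (Real.exp (-η))) := by
      have hmul : Tendsto (fun n : ℕ => (⌊η * (n : ℝ)⌋₊ : ℝ) * Real.log (1 - 1 / (n : ℝ)))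
          atTop (nhds (-η)) := by
        have h := hk.mul hlog
        rw [show η * (-1) = -η by ring] at h
        apply h.congr'
        filter_upwards [eventually_ge_atTop 1] with n hn
        have hn' : ((n:ℝ)) ≠ 0 := by
          have : (0:ℝ) < n := by exact_mod_cast hn
          exact ne_of_gt this
        have : 1 + (-1) / (n:ℝ) = 1 - 1 / (n:ℝ) := by ring
        rw [this]
        field_simp
      have h := (Real.continuous_exp.tendsto _).comp hmul
      apply h.congr'
      filter_upwards [eventually_ge_atTop 2] with n hn
      have hn' : (2:ℝ) ≤ n := by exact_mod_cast hn
      have hpos : (0:ℝ) < 1 - 1 / (n : ℝ) := by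
        rw [sub_pos, div_lt_one (by linarith)]; linarith
      simp only [Function.comp_apply, hsdef]
      rw [Real.exp_nat_mul, Real.exp_log hpos]
    have hprod : Tendsto (fun n => s n * o n) atTop (nhds L) := by
      have h := hsT.mul hoT
      have hval : Real.exp (-η) * (c / g) = L := by rw [hL]; ring
      rw [← hval]
      exact h
    have hprod1 : Tendsto (fun n => 1 + s n * o n) atTop (nhds (1 + L)) :=
      tendsto_const_nhds.add hprod
    have hmain : Tendsto (fun n => s n * o n / (1 + s n * o n)) atTop
        (nhds (L / (1 + L))) :=
      hprod.div hprod1 (by positivity)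
    have hfinal : L / (1 + L) = c * Real.exp (-η) / (g + c * Real.exp (-η)) := by
      rw [hL]
      have hd : (0:ℝ) < g + c * Real.exp (-η) := by positivity
      rw [div_eq_div_iff (by positivity) (ne_of_gt hd)]
      field_simp
    rw [← hfinal]
    apply hmain.congr'
    filter_upwards [eventually_ge_atTop 2] with n hn
    have hn' : (2:ℝ) ≤ n := by exact_mod_cast hn
    have hl0 : (0:ℝ) ≤ 1 / (n : ℝ) := by positivity
    have hl1 : (1:ℝ) / (n : ℝ) ≤ 1 := by
      rw [div_le_one (by linarith)]; linarith
    set A := c * (1 - (1:ℝ)/2) with hA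
    set B := g * (1 - (1:ℝ)/2 + (1 / (n : ℝ)) * ((1:ℝ)/2) *
        (1 + (1:ℝ)/2 - (1 / (n : ℝ)) * ((1:ℝ)/2))) with hB
    have hApos : 0 < A := by rw [hA]; norm_num; linarith
    have hBpos : 0 < B := by
      have hin : (0:ℝ) < 1 - (1:ℝ)/2 + (1 / (n : ℝ)) * ((1:ℝ)/2) *
          (1 + (1:ℝ)/2 - (1 / (n : ℝ)) * ((1:ℝ)/2)) := by
        nlinarith [mul_nonneg hl0 (sub_nonneg.mpr hl1)]
      rw [hB]
      exact mul_pos hg hin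
    have hon : o n = A / B := rfl
    have honpos : 0 < o n := by rw [hon]; positivity
    have hAB : A / (A + B) = (o n) / (1 + o n) := by
      have hBne : B ≠ 0 := ne_of_gt hBpos
      have hABne : A + B ≠ 0 := by positivity
      have h1 : (1:ℝ) + A / B = (B + A) / B := by field_simp
      rw [hon, h1, div_div_div_eq]
      rw [div_eq_div_iff (by positivity) (by positivity)]
      ring
    rw [hAB, iter_phi _ hl0 hl1 _ (o n) (le_of_lt honpos)]
  · -- part (iii)
    have he : Real.exp (-η) < 1 := Real.exp_lt_one_iff.mpr (by linarith)
    have he0 : 0 < Real.exp (-η) := Real.exp_pos _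
    rw [div_lt_div_iff₀ (by positivity) (by positivity)]
    nlinarith [mul_pos (mul_pos hc hg) (sub_pos.mpr he)]
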